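/- Let x ∈ E(A) with type σ = σ(x;A) > 0, and fix an integer m ≥ 1. Then for every k ∈ {0,1,…,m−1}, the convergence radius of the Mittag-Leffler series F_k(z;A)x = Σ_{n≥0} z^{mn+k} A^n x/(mn+k)! does not depend on k and equals σ^{−1/m}·p^{−1/(p−1)}; equivalently, limsup_{n→∞} (‖A^n x‖ / |(mn+k)!|_p)^{1/(mn+k)} = σ^{1/m}·p^{1/(p−1)}. -/

import Mathlib

open Filter Topology

/-!
STATEMENT 0. Since `ℂ_[p]` (the completion of an algebraic closure of `ℚ_p`) is not yet
available in Mathlib, we axiomatize it faithfully as a complete, algebraically closed,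
nonarchimedean nontrivially normed field `K` equipped with an isometric `ℚ_[p]`-algebra
structure.  The closed operator `A` with domain `𝒟(A) = D ⊆ 𝔅` is encoded as a submodule
`D` together with a (total) linear map `A` whose restriction to `D` is the operator;
closedness of the operator means the graph `{(x, A x) | x ∈ D}` is closed, and membership
of `x` in `⋂ₙ 𝒟(Aⁿ)` is `∀ n, A^[n] x ∈ D`.
-/


lemma aux_digits_tendsto (p : ℕ) (hp2 : 2 ≤ p) :
    Tendsto (fun N : ℕ => ((p.digits N).sum : ℝ) / N) atTop (𝓝 0) := by
  have hlog2 : (0:ℝ) < Real.log 2 := Real.log_pos (by norm_num)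
  have h1 : Tendsto (fun N : ℕ => Real.log N / N) atTop (𝓝 0) :=
    (Real.isLittleO_log_id_atTop.tendsto_div_nhds_zero).comp tendsto_natCast_atTop_atTop
  have h2 : Tendsto (fun N : ℕ => (1:ℝ)/N) atTop (𝓝 0) := tendsto_one_div_atTop_nhds_zero_nat
  have hmain : Tendsto (fun N : ℕ =>
      (((p:ℝ)-1) * (Real.log N / Real.log 2) + ((p:ℝ)-1)) / N) atTop (𝓝 0) := by
    have h3 := ((h1.const_mul (((p:ℝ)-1)/Real.log 2)).add (h2.const_mul ((p:ℝ)-1)))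
    simp only [mul_zero, add_zero] at h3
    apply h3.congr'
    filter_upwards [eventually_ge_atTop 1] with N hN
    have hN0 : ((N:ℝ)) ≠ 0 := by positivity
    field_simp
  apply tendsto_of_tendsto_of_tendsto_of_le_of_le' tendsto_const_nhds hmain
  · filter_upwards with N; positivity
  · filter_upwards [eventually_ge_atTop 1] with N hN
    have hN0 : (0:ℝ) < (N:ℝ) := by exact_mod_cast hN
    have hNne : N ≠ 0 := by omega
    have hsum : (p.digits N).sum ≤ (p - 1) * (Nat.log p N + 1) := by
      calc (p.digits N).sum ≤ (p.digits N).length • (p-1) :=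
            List.sum_le_card_nsmul _ _ (fun x hx => by
              have := Nat.digits_lt_base (by omega : 1 < p) hx; omega)
        _ = (p - 1) * (Nat.log p N + 1) := by
            rw [Nat.digits_len p N (by omega) hNne, smul_eq_mul]; ring
    have hlogle : (Nat.log p N : ℝ) ≤ Real.log N / Real.log 2 := by
      have hpow : (2:ℕ) ^ Nat.log p N ≤ N :=
        le_trans (Nat.pow_le_pow_left hp2 _) (Nat.pow_log_le_self p hNne)
      have hpowR : (2:ℝ) ^ Nat.log p N ≤ (N:ℝ) := by exact_mod_cast hpow
      have h5 := Real.log_le_log (by positivity) hpowR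
      rw [Real.log_pow] at h5
      rw [le_div_iff₀ hlog2]; exact h5
    have h3 : ((p.digits N).sum : ℝ) ≤ ((p:ℝ)-1) * ((Nat.log p N : ℝ) + 1) := by
      have hcast : (((p-1) * (Nat.log p N + 1) : ℕ) : ℝ) = ((p:ℝ)-1) * ((Nat.log p N : ℝ) + 1) := by
        push_cast [Nat.cast_sub (by omega : 1 ≤ p)]; ring
      calc ((p.digits N).sum : ℝ) ≤ (((p-1) * (Nat.log p N + 1) : ℕ) : ℝ) := by exact_mod_cast hsum
        _ = _ := hcast
    gcongr
    nlinarith [hlogle, h3]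

lemma aux_val_tendsto (p : ℕ) [hp : Fact p.Prime] :
    Tendsto (fun N : ℕ => (padicValNat p (N.factorial) : ℝ) / N) atTop (𝓝 (1/((p:ℝ)-1))) := by
  have hp2 : 2 ≤ p := hp.out.two_le
  have hp1 : ((p:ℝ)-1) ≠ 0 := by
    have : (2:ℝ) ≤ (p:ℝ) := by exact_mod_cast hp2
    linarith
  have h0 := aux_digits_tendsto p hp2
  have hlim : Tendsto (fun N : ℕ => (1 - ((p.digits N).sum : ℝ)/N) * (1/((p:ℝ)-1)))
      atTop (𝓝 (1/((p:ℝ)-1))) := by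
    have := ((tendsto_const_nhds (x := (1:ℝ))).sub h0).mul_const (1/((p:ℝ)-1))
    simpa using this
  apply hlim.congr'
  filter_upwards [eventually_ge_atTop 1] with N hN
  have hNne : (N:ℝ) ≠ 0 := by positivity
  have hdle : (p.digits N).sum ≤ N := Nat.digit_sum_le p N
  have hleg := sub_one_mul_padicValNat_factorial (p := p) N
  have hkey : ((p:ℝ)-1) * (padicValNat p (N.factorial) : ℝ) = (N:ℝ) - ((p.digits N).sum : ℝ) := by
    have : (((p-1) * padicValNat p (N.factorial) : ℕ) : ℝ) = ((N - (p.digits N).sum : ℕ) : ℝ) := by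
      rw [hleg]
    rw [Nat.cast_mul, Nat.cast_sub hdle, Nat.cast_sub (by omega : 1 ≤ p)] at this
    push_cast at this ⊢
    linarith
  have hexp : (1 - ((p.digits N).sum : ℝ)/N) * N = (N:ℝ) - ((p.digits N).sum : ℝ) := by
    field_simp
  rw [mul_one_div, div_eq_div_iff hp1 hNne, hexp]
  linarith [hkey]

theorem mittag_leffler_radius
    {p : ℕ} [Fact p.Prime]
    {K : Type*} [NontriviallyNormedField K] [CompleteSpace K] [IsAlgClosed K]
    [IsUltrametricDist K] [Algebra ℚ_[p] K]
    (hK : ∀ q : ℚ_[p], ‖algebraMap ℚ_[p] K q‖ = ‖q‖)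
    {B : Type*} [NormedAddCommGroup B] [NormedSpace K B] [CompleteSpace B]
    [IsUltrametricDist B]
    (D : Submodule K B) (A : B →ₗ[K] B)
    (hA : IsClosed {q : B × B | q.1 ∈ D ∧ A q.1 = q.2})
    (m : ℕ) (hm : 1 ≤ m) (k : ℕ) (hk : k < m)
    (x : B)
    (hxdom : ∀ n : ℕ, (⇑A)^[n] x ∈ D)
    (hxE : ∃ α > (0 : ℝ), ∃ c > (0 : ℝ), ∀ n : ℕ, ‖(⇑A)^[n] x‖ ≤ c * α ^ n)
    (σ : ℝ)
    (hσdef : σ = Filter.limsup (fun n : ℕ => ‖(⇑A)^[n] x‖ ^ (1 / (n : ℝ))) atTop)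
    (hσpos : 0 < σ) :
    Filter.limsup
        (fun n : ℕ =>
          (‖(⇑A)^[n] x‖ / ‖((m * n + k).factorial : K)‖) ^ (1 / ((m * n + k : ℕ) : ℝ)))
        atTop
      = σ ^ (1 / (m : ℝ)) * (p : ℝ) ^ (1 / ((p : ℝ) - 1)) := by
  obtain ⟨α, hα, c0, hc0, hbound⟩ := hxE
  have hp2 : 2 ≤ p := (Fact.out : p.Prime).two_le
  have hppos : (0:ℝ) < p := by
    have : (2:ℝ) ≤ (p:ℝ) := by exact_mod_cast hp2
    linarith
  have hmR : (0:ℝ) < (m:ℝ) := by exact_mod_cast hm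
  -- positivity of iterates
  have hpos : ∀ n, 0 < ‖(⇑A)^[n] x‖ := by
    intro n
    rcases (norm_nonneg ((⇑A)^[n] x)).lt_or_eq with h | h
    · exact h
    exfalso
    have hz : (⇑A)^[n] x = 0 := norm_eq_zero.1 h.symm
    have h0 : ∀ i, (⇑A)^[i] (0:B) = 0 := by
      intro i
      induction i with
      | zero => rfl
      | succ i ih => rw [Function.iterate_succ_apply', ih, map_zero]
    have hev : ∀ᶠ j in atTop, ‖(⇑A)^[j] x‖ ^ (1/(j:ℝ)) = (0:ℝ) := by
      filter_upwards [eventually_ge_atTop (n+1)] with j hj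
      have hjz : (⇑A)^[j] x = 0 := by
        rw [show j = (j-n) + n by omega, Function.iterate_add_apply, hz, h0]
      rw [hjz, norm_zero, Real.zero_rpow]
      exact one_div_ne_zero (by exact_mod_cast (by omega : j ≠ 0))
    have hσ0 : σ = 0 := by rw [hσdef, limsup_congr hev, limsup_const]
    linarith
  set L := Real.log σ with hL
  have hσexp : Real.exp L = σ := Real.exp_log hσpos
  set v : ℕ → ℝ := fun n => Real.log ‖(⇑A)^[n] x‖ * (1/(n:ℝ)) with hv
  set u : ℕ → ℝ := fun n : ℕ => ‖(⇑A)^[n] x‖ ^ (1 / (n : ℝ)) with hu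
  have hueq : ∀ n, u n = Real.exp (v n) := fun n => Real.rpow_def_of_pos (hpos n) _
  have hM : ∀ n, 1 ≤ n → v n ≤ |Real.log c0| + |Real.log α| := by
    intro n hn
    have hn0 : (0:ℝ) < (n:ℝ) := by exact_mod_cast hn
    have h1 : Real.log ‖(⇑A)^[n] x‖ ≤ Real.log c0 + n * Real.log α := by
      have h2 := Real.log_le_log (hpos n) (hbound n)
      rwa [Real.log_mul hc0.ne' (pow_pos hα n).ne', Real.log_pow] at h2
    have h3 : v n ≤ (Real.log c0 + n * Real.log α) * (1/(n:ℝ)) :=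
      mul_le_mul_of_nonneg_right h1 (by positivity)
    have h4 : (Real.log c0 + (n:ℝ) * Real.log α) * (1/(n:ℝ))
        = Real.log c0 * (1/(n:ℝ)) + Real.log α := by
      field_simp
    have e1 : Real.log c0 * (1/(n:ℝ)) ≤ |Real.log c0| := by
      rw [mul_one_div]
      calc Real.log c0 / n ≤ |Real.log c0 / (n:ℝ)| := le_abs_self _
        _ = |Real.log c0| / n := by rw [abs_div, abs_of_pos hn0]
        _ ≤ |Real.log c0| := div_le_self (abs_nonneg _) (by exact_mod_cast hn)
    have e2 : Real.log α ≤ |Real.log α| := le_abs_self _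
    rw [h4] at h3
    linarith
  have hbddu : IsBoundedUnder (· ≤ ·) atTop u := by
    apply isBoundedUnder_of_eventually_le (a := Real.exp (|Real.log c0| + |Real.log α|))
    filter_upwards [eventually_ge_atTop 1] with n hn
    rw [hueq n]
    exact Real.exp_le_exp.2 (hM n hn)
  have hcobu : IsCoboundedUnder (· ≤ ·) atTop u :=
    isCoboundedUnder_le_of_le atTop (fun n => Real.rpow_nonneg (norm_nonneg _) _)
  have hσu : limsup u atTop = σ := hσdef.symm
  have hF1 : ∀ ε : ℝ, 0 < ε → ∀ᶠ n in atTop, v n ≤ L + ε := by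
    intro ε hε
    have h1 : limsup u atTop < Real.exp (L + ε) := by
      rw [hσu, Real.exp_add, hσexp]
      nlinarith [Real.add_one_le_exp ε]
    filter_upwards [eventually_lt_of_limsup_lt h1 hbddu] with n hn
    rw [hueq n] at hn
    exact (Real.exp_lt_exp.1 hn).le
  have hF2 : ∀ ε : ℝ, 0 < ε → ∃ᶠ n in atTop, L - ε ≤ v n := by
    intro ε hε
    have h1 : Real.exp (L - ε) < limsup u atTop := by
      rw [hσu, Real.exp_sub, hσexp]
      have h2 : (1:ℝ) < Real.exp ε := by nlinarith [Real.add_one_le_exp ε]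
      exact div_lt_self hσpos h2
    exact (frequently_lt_of_lt_limsup hcobu h1).mono fun n hn => by
      rw [hueq n] at hn; exact (Real.exp_lt_exp.1 hn).le
  -- factorial norms
  have hNge : ∀ n : ℕ, n ≤ m*n+k := by
    intro n
    have := Nat.mul_le_mul_right n hm
    omega
  have hNpos : ∀ n : ℕ, 1 ≤ n → (0:ℝ) < ((m*n+k : ℕ):ℝ) := by
    intro n hn
    have h := hNge n
    exact_mod_cast (by omega : 0 < m*n+k)
  have hfactnorm : ∀ N : ℕ, ‖((N.factorial : ℕ) : K)‖
      = (p:ℝ) ^ (-(padicValNat p N.factorial : ℤ)) := by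
    intro N
    have h1 : ((N.factorial : ℕ) : K) = algebraMap ℚ_[p] K ((N.factorial : ℕ) : ℚ_[p]) :=
      (map_natCast (algebraMap ℚ_[p] K) _).symm
    have hne : ((N.factorial : ℕ) : ℚ_[p]) ≠ 0 := Nat.cast_ne_zero.2 N.factorial_ne_zero
    rw [h1, hK, Padic.norm_eq_zpow_neg_valuation hne, Padic.valuation_natCast]
  have hfactpos : ∀ N : ℕ, 0 < ‖((N.factorial : ℕ) : K)‖ := by
    intro N
    rw [hfactnorm]
    positivity
  have hlogfact : ∀ N : ℕ, Real.log ‖((N.factorial : ℕ) : K)‖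
      = -((padicValNat p N.factorial : ℝ) * Real.log p) := by
    intro N
    rw [hfactnorm, Real.log_zpow]
    simp only [Int.cast_neg, Int.cast_natCast]
    ring
  set w : ℕ → ℝ := fun n => (padicValNat p ((m*n+k).factorial) : ℝ) / ((m*n+k : ℕ):ℝ)
      * Real.log p with hw
  set P := Real.log p * (1/((p:ℝ)-1)) with hP
  have hwtend : Tendsto w atTop (𝓝 P) := by
    have hcomp : Tendsto (fun n : ℕ => m*n+k) atTop atTop :=
      tendsto_atTop_mono hNge tendsto_id
    have h1 := ((aux_val_tendsto p).comp hcomp).mul_const (Real.log p)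
    rw [hw, hP, mul_comm]
    exact h1
  set cseq : ℕ → ℝ := fun n => (n:ℝ)/((m*n+k : ℕ):ℝ) with hcseq
  have hcnn : ∀ n, 0 ≤ cseq n := fun n => by positivity
  have hctend : Tendsto cseq atTop (𝓝 (1/(m:ℝ))) := by
    have h1 : Tendsto (fun n : ℕ => (m:ℝ) + (k:ℝ) * (1/(n:ℝ))) atTop (𝓝 ((m:ℝ) + (k:ℝ)*0)) :=
      tendsto_const_nhds.add (tendsto_one_div_atTop_nhds_zero_nat.const_mul _)
    rw [mul_zero, add_zero] at h1
    have h2 := (tendsto_const_nhds (x := (1:ℝ))).div h1 hmR.ne'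
    apply h2.congr'
    filter_upwards [eventually_ge_atTop 1] with n hn
    have hn0 : (n:ℝ) ≠ 0 := by positivity
    have hN0 : ((m*n+k : ℕ):ℝ) ≠ 0 := (hNpos n hn).ne'
    rw [hcseq]
    simp only [Pi.div_apply]
    push_cast at hN0 ⊢
    field_simp
    try ring
  set g : ℕ → ℝ := fun n : ℕ =>
      (‖(⇑A)^[n] x‖ / ‖((m * n + k).factorial : K)‖) ^ (1 / ((m * n + k : ℕ) : ℝ)) with hg
  have hgexp : ∀ n, 1 ≤ n → g n = Real.exp (cseq n * v n + w n) := by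
    intro n hn
    have hn0 : (n:ℝ) ≠ 0 := by
      have : (0:ℝ) < (n:ℝ) := by exact_mod_cast hn
      exact this.ne'
    have hN0 : ((m*n+k : ℕ):ℝ) ≠ 0 := (hNpos n hn).ne'
    have hb : 0 < ‖(⇑A)^[n] x‖ / ‖((m*n+k).factorial : K)‖ := div_pos (hpos n) (hfactpos _)
    rw [hg]
    simp only
    rw [Real.rpow_def_of_pos hb, Real.log_div (hpos n).ne' (hfactpos _).ne', hlogfact]
    congr 1
    rw [hcseq, hv, hw]
    field_simp
    try ring
  set T := L * (1/(m:ℝ)) + P with hT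
  have hub : ∀ ε : ℝ, 0 < ε → ∀ᶠ n in atTop, g n ≤ Real.exp (T + 3*ε) := by
    intro ε hε
    have hc1 : ∀ᶠ n in atTop, cseq n * (L + ε) < L * (1/(m:ℝ)) + 2*ε := by
      apply (hctend.mul_const (L+ε)).eventually_lt_const
      have h5 : ε * (1/(m:ℝ)) ≤ ε := by
        rw [mul_one_div]
        exact div_le_self hε.le (by exact_mod_cast hm)
      nlinarith
    have hw1 : ∀ᶠ n in atTop, w n < P + ε := hwtend.eventually_lt_const (by linarith)
    filter_upwards [hF1 ε hε, hc1, hw1, eventually_ge_atTop 1] with n h1 h2 h3 hn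
    rw [hgexp n hn]
    apply Real.exp_le_exp.2
    have h6 : cseq n * v n ≤ cseq n * (L + ε) := mul_le_mul_of_nonneg_left h1 (hcnn n)
    rw [hT]
    linarith
  have hlb : ∀ ε : ℝ, 0 < ε → ∃ᶠ n in atTop, Real.exp (T - 3*ε) ≤ g n := by
    intro ε hε
    have hc1 : ∀ᶠ n in atTop, L * (1/(m:ℝ)) - 2*ε < cseq n * (L - ε) := by
      apply (hctend.mul_const (L-ε)).eventually_const_lt
      have h5 : ε * (1/(m:ℝ)) ≤ ε := by
        rw [mul_one_div]
        exact div_le_self hε.le (by exact_mod_cast hm)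
      nlinarith
    have hw1 : ∀ᶠ n in atTop, P - ε < w n := hwtend.eventually_const_lt (by linarith)
    refine ((hF2 ε hε).and_eventually (hc1.and (hw1.and (eventually_ge_atTop 1)))).mono ?_
    rintro n ⟨h1, h2, h3, hn⟩
    rw [hgexp n hn]
    apply Real.exp_le_exp.2
    have h6 : cseq n * (L - ε) ≤ cseq n * v n := mul_le_mul_of_nonneg_left h1 (hcnn n)
    rw [hT]
    linarith
  have hgbdd : IsBoundedUnder (· ≤ ·) atTop g :=
    isBoundedUnder_of_eventually_le ((hub 1 one_pos).mono fun n h => h)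
  have hgcob : IsCoboundedUnder (· ≤ ·) atTop g :=
    isCoboundedUnder_le_of_le atTop
      (fun n => Real.rpow_nonneg (div_nonneg (norm_nonneg _) (norm_nonneg _)) _)
  have hle : limsup g atTop ≤ Real.exp T := by
    have htt : Tendsto (fun ε : ℝ => Real.exp (T + 3*ε)) (𝓝[>] 0) (𝓝 (Real.exp T)) := by
      have h1 : Tendsto (fun ε : ℝ => Real.exp (T + 3*ε)) (𝓝 0) (𝓝 (Real.exp (T + 3*0))) :=
        ((Real.continuous_exp.comp (continuous_const.add
          (continuous_const.mul continuous_id))).tendsto 0)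
      rw [mul_zero, add_zero] at h1
      exact h1.mono_left nhdsWithin_le_nhds
    apply ge_of_tendsto htt
    filter_upwards [self_mem_nhdsWithin] with ε hε
    exact limsup_le_of_le hgcob (hub ε hε)
  have hge : Real.exp T ≤ limsup g atTop := by
    have htt : Tendsto (fun ε : ℝ => Real.exp (T - 3*ε)) (𝓝[>] 0) (𝓝 (Real.exp T)) := by
      have h1 : Tendsto (fun ε : ℝ => Real.exp (T - 3*ε)) (𝓝 0) (𝓝 (Real.exp (T - 3*0))) :=
        ((Real.continuous_exp.comp (continuous_const.sub
          (continuous_const.mul continuous_id))).tendsto 0)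
      rw [mul_zero, sub_zero] at h1
      exact h1.mono_left nhdsWithin_le_nhds
    apply le_of_tendsto htt
    filter_upwards [self_mem_nhdsWithin] with ε hε
    exact le_limsup_of_frequently_le (hlb ε hε) hgbdd
  have hfin : limsup g atTop = Real.exp T := le_antisymm hle hge
  rw [hfin, hT, hP, hL, Real.exp_add, Real.rpow_def_of_pos hσpos, Real.rpow_def_of_pos hppos]
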